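/- The vector fields X₁, …, X₈ on ℝ⁶ are linearly independent over ℝ, their real linear span is closed under the Lie bracket of vector fields, and there exists an injective linear map φ : 𝔰𝔩(3,ℝ) → C^∞(ℝ⁶, ℝ⁶) whose range equals the real span of {X₁,…,X₈} and which satisfies φ([A,B]) = [φ(A), φ(B)] for all A, B ∈ 𝔰𝔩(3,ℝ); i.e. the span of X₁,…,X₈ with the bracket of vector fields is a Lie algebra isomorphic to 𝔰𝔩(3,ℝ). -/

import Mathlib

noncomputable def lieBracket (V W : (Fin 6 → ℝ) → (Fin 6 → ℝ)) :
    (Fin 6 → ℝ) → (Fin 6 → ℝ) :=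
  fun m => fderiv ℝ W m (V m) - fderiv ℝ V m (W m)

/-- The eight symmetry vector fields `X₁,…,X₈` on ℝ⁶ with coordinates
`m = (x₁,y₁,x₂,y₂,x₃,y₃)` (indices `0,…,5`). -/
def Xf : Fin 8 → (Fin 6 → ℝ) → (Fin 6 → ℝ) :=
  ![fun _ => ![1, 0, 1, 0, 1, 0],
    fun _ => ![0, 1, 0, 1, 0, 1],
    fun m => ![m 1, 0, m 3, 0, m 5, 0],
    fun m => ![0, m 0, 0, m 2, 0, m 4],
    fun m => ![m 0, 0, m 2, 0, m 4, 0],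
    fun m => ![0, m 1, 0, m 3, 0, m 5],
    fun m => ![m 0 * m 1, m 1 ^ 2, m 2 * m 3, m 3 ^ 2, m 4 * m 5, m 5 ^ 2],
    fun m => ![m 0 ^ 2, m 0 * m 1, m 2 ^ 2, m 2 * m 3, m 4 ^ 2, m 4 * m 5]]

/-! ### Auxiliary vector-evaluation lemmas -/

lemma vec6_zero {α : Type*} (a b c d e f : α) : (![a,b,c,d,e,f] : Fin 6 → α) 0 = a := rfl
lemma vec6_one {α : Type*} (a b c d e f : α) : (![a,b,c,d,e,f] : Fin 6 → α) 1 = b := rfl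
lemma vec6_two {α : Type*} (a b c d e f : α) : (![a,b,c,d,e,f] : Fin 6 → α) 2 = c := rfl
lemma vec6_three {α : Type*} (a b c d e f : α) : (![a,b,c,d,e,f] : Fin 6 → α) 3 = d := rfl
lemma vec6_four {α : Type*} (a b c d e f : α) : (![a,b,c,d,e,f] : Fin 6 → α) 4 = e := rfl
lemma vec6_five {α : Type*} (a b c d e f : α) : (![a,b,c,d,e,f] : Fin 6 → α) 5 = f := rfl

lemma vec8_zero {α : Type*} (a b c d e f g h : α) : (![a,b,c,d,e,f,g,h] : Fin 8 → α) 0 = a := rfl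
lemma vec8_one {α : Type*} (a b c d e f g h : α) : (![a,b,c,d,e,f,g,h] : Fin 8 → α) 1 = b := rfl
lemma vec8_two {α : Type*} (a b c d e f g h : α) : (![a,b,c,d,e,f,g,h] : Fin 8 → α) 2 = c := rfl
lemma vec8_three {α : Type*} (a b c d e f g h : α) : (![a,b,c,d,e,f,g,h] : Fin 8 → α) 3 = d := rfl
lemma vec8_four {α : Type*} (a b c d e f g h : α) : (![a,b,c,d,e,f,g,h] : Fin 8 → α) 4 = e := rfl
lemma vec8_five {α : Type*} (a b c d e f g h : α) : (![a,b,c,d,e,f,g,h] : Fin 8 → α) 5 = f := rfl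
lemma vec8_six {α : Type*} (a b c d e f g h : α) : (![a,b,c,d,e,f,g,h] : Fin 8 → α) 6 = g := rfl
lemma vec8_seven {α : Type*} (a b c d e f g h : α) : (![a,b,c,d,e,f,g,h] : Fin 8 → α) 7 = h := rfl

lemma vec3_zero {α : Type*} (a b c : α) : (![a,b,c] : Fin 3 → α) 0 = a := rfl
lemma vec3_one {α : Type*} (a b c : α) : (![a,b,c] : Fin 3 → α) 1 = b := rfl
lemma vec3_two {α : Type*} (a b c : α) : (![a,b,c] : Fin 3 → α) 2 = c := rfl

lemma vec6_ext {α : Type*} {f g : Fin 6 → α} (h0 : f 0 = g 0) (h1 : f 1 = g 1)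
    (h2 : f 2 = g 2) (h3 : f 3 = g 3) (h4 : f 4 = g 4) (h5 : f 5 = g 5) : f = g := by
  funext k
  fin_cases k
  exacts [h0, h1, h2, h3, h4, h5]

/-! ### Derivative machinery for quadratic vector fields -/

noncomputable def dq (i j : Fin 6) (p q s t u : ℝ) (m : Fin 6 → ℝ) : (Fin 6 → ℝ) →L[ℝ] ℝ :=
  (p - (s * m i + t * m j + u) - m i * s) • ContinuousLinearMap.proj i
    + (q - m i * t) • ContinuousLinearMap.proj j

lemma dq_apply (i j : Fin 6) (p q s t u : ℝ) (m v : Fin 6 → ℝ) :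
    dq i j p q s t u m v
      = (p - (s * m i + t * m j + u) - m i * s) * v i + (q - m i * t) * v j := by
  simp [dq]

lemma hasFDerivAt_quad (i j : Fin 6) (p q r s t u : ℝ) (m : Fin 6 → ℝ) :
    HasFDerivAt (fun m : Fin 6 → ℝ => p * m i + q * m j + r - m i * (s * m i + t * m j + u))
      (dq i j p q s t u m) m := by
  have hi : HasFDerivAt (fun m : Fin 6 → ℝ => m i)
      (ContinuousLinearMap.proj i : (Fin 6 → ℝ) →L[ℝ] ℝ) m := hasFDerivAt_apply i m
  have hj : HasFDerivAt (fun m : Fin 6 → ℝ => m j)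
      (ContinuousLinearMap.proj j : (Fin 6 → ℝ) →L[ℝ] ℝ) m := hasFDerivAt_apply j m
  have h := (((hi.const_mul p).add (hj.const_mul q)).add_const r).sub
    (hi.mul (((hi.const_mul s).add (hj.const_mul t)).add_const u))
  refine h.congr_fderiv ?_
  ext v
  simp [dq]
  ring

/-- The projective vector field on ℝ⁶ associated to a 3×3 matrix. -/
def Vf (A : Matrix (Fin 3) (Fin 3) ℝ) : (Fin 6 → ℝ) → Fin 6 → ℝ := fun m =>
  ![A 0 0 * m 0 + A 0 1 * m 1 + A 0 2 - m 0 * (A 2 0 * m 0 + A 2 1 * m 1 + A 2 2),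
    A 1 1 * m 1 + A 1 0 * m 0 + A 1 2 - m 1 * (A 2 1 * m 1 + A 2 0 * m 0 + A 2 2),
    A 0 0 * m 2 + A 0 1 * m 3 + A 0 2 - m 2 * (A 2 0 * m 2 + A 2 1 * m 3 + A 2 2),
    A 1 1 * m 3 + A 1 0 * m 2 + A 1 2 - m 3 * (A 2 1 * m 3 + A 2 0 * m 2 + A 2 2),
    A 0 0 * m 4 + A 0 1 * m 5 + A 0 2 - m 4 * (A 2 0 * m 4 + A 2 1 * m 5 + A 2 2),
    A 1 1 * m 5 + A 1 0 * m 4 + A 1 2 - m 5 * (A 2 1 * m 5 + A 2 0 * m 4 + A 2 2)]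

noncomputable def DVf (A : Matrix (Fin 3) (Fin 3) ℝ) (m : Fin 6 → ℝ) :
    (Fin 6 → ℝ) →L[ℝ] (Fin 6 → ℝ) :=
  ContinuousLinearMap.pi
    ![dq 0 1 (A 0 0) (A 0 1) (A 2 0) (A 2 1) (A 2 2) m,
      dq 1 0 (A 1 1) (A 1 0) (A 2 1) (A 2 0) (A 2 2) m,
      dq 2 3 (A 0 0) (A 0 1) (A 2 0) (A 2 1) (A 2 2) m,
      dq 3 2 (A 1 1) (A 1 0) (A 2 1) (A 2 0) (A 2 2) m,
      dq 4 5 (A 0 0) (A 0 1) (A 2 0) (A 2 1) (A 2 2) m,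
      dq 5 4 (A 1 1) (A 1 0) (A 2 1) (A 2 0) (A 2 2) m]

lemma hasFDerivAt_Vf (A : Matrix (Fin 3) (Fin 3) ℝ) (m : Fin 6 → ℝ) :
    HasFDerivAt (Vf A) (DVf A m) m := by
  apply hasFDerivAt_pi''
  intro i
  fin_cases i <;>
    simp only [DVf, Vf, ContinuousLinearMap.proj_pi, Matrix.cons_val_zero, Matrix.cons_val_one,
      Matrix.head_cons, Matrix.cons_val_two, Matrix.tail_cons, Matrix.cons_val_three,
      Matrix.cons_val_four, Fin.isValue] <;>
    exact hasFDerivAt_quad _ _ _ _ _ _ _ _ _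

lemma fderiv_Vf (A : Matrix (Fin 3) (Fin 3) ℝ) (m : Fin 6 → ℝ) :
    fderiv ℝ (Vf A) m = DVf A m := (hasFDerivAt_Vf A m).fderiv

set_option maxHeartbeats 1000000 in
lemma lieBracket_Vf (A B : Matrix (Fin 3) (Fin 3) ℝ) :
    lieBracket (Vf A) (Vf B) = Vf (B * A - A * B) := by
  funext m
  show fderiv ℝ (Vf B) m (Vf A m) - fderiv ℝ (Vf A) m (Vf B m) = Vf (B * A - A * B) m
  rw [fderiv_Vf, fderiv_Vf]
  apply vec6_ext <;>
    simp only [Pi.sub_apply, DVf, Vf, ContinuousLinearMap.pi_apply, vec6_zero, vec6_one,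
      vec6_two, vec6_three, vec6_four, vec6_five, dq_apply, Matrix.sub_apply, Matrix.mul_apply,
      Fin.sum_univ_three] <;> ring

/-! ### `Vf` as a linear combination of the `Xf i` -/

def gcoef (M : Matrix (Fin 3) (Fin 3) ℝ) : Fin 8 → ℝ :=
  ![M 0 2, M 1 2, M 0 1, M 1 0, M 0 0 - M 2 2, M 1 1 - M 2 2, -(M 2 1), -(M 2 0)]

lemma Vf_eq_sum (M : Matrix (Fin 3) (Fin 3) ℝ) :
    Vf M = ∑ i, gcoef M i • Xf i := by
  funext m
  show Vf M m = (∑ i, gcoef M i • Xf i) m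
  rw [Fin.sum_univ_eight]
  apply vec6_ext <;>
    simp only [Vf, gcoef, Xf, Pi.add_apply, Pi.smul_apply, smul_eq_mul,
      vec8_zero, vec8_one, vec8_two, vec8_three, vec8_four, vec8_five, vec8_six, vec8_seven,
      vec6_zero, vec6_one, vec6_two, vec6_three, vec6_four, vec6_five] <;> ring

lemma Vf_add (M N : Matrix (Fin 3) (Fin 3) ℝ) : Vf (M + N) = Vf M + Vf N := by
  funext m
  show Vf (M + N) m = Vf M m + Vf N m
  apply vec6_ext <;>
    simp only [Vf, Matrix.add_apply, Pi.add_apply,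
      vec6_zero, vec6_one, vec6_two, vec6_three, vec6_four, vec6_five] <;> ring

lemma Vf_smul (c : ℝ) (M : Matrix (Fin 3) (Fin 3) ℝ) : Vf (c • M) = c • Vf M := by
  funext m
  show Vf (c • M) m = c • Vf M m
  apply vec6_ext <;>
    simp only [Vf, Matrix.smul_apply, Pi.smul_apply, smul_eq_mul,
      vec6_zero, vec6_one, vec6_two, vec6_three, vec6_four, vec6_five] <;> ring

/-! ### The linear map from `sl 3` -/

noncomputable def phi : (LieAlgebra.SpecialLinear.sl (Fin 3) ℝ) →ₗ[ℝ] ((Fin 6 → ℝ) → (Fin 6 → ℝ)) where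
  toFun A := Vf (-(A.val))
  map_add' A B := by
    show Vf (-(A.val + B.val)) = Vf (-(A.val)) + Vf (-(B.val))
    rw [neg_add, Vf_add]
  map_smul' c A := by
    show Vf (-(c • A.val)) = c • Vf (-(A.val))
    rw [← smul_neg, Vf_smul]

lemma phi_apply (A : LieAlgebra.SpecialLinear.sl (Fin 3) ℝ) : phi A = Vf (-(A.val)) := rfl

lemma phi_bracket (A B : LieAlgebra.SpecialLinear.sl (Fin 3) ℝ) :
    phi ⁅A, B⁆ = lieBracket (phi A) (phi B) := by
  rw [phi_apply, phi_apply, phi_apply, lieBracket_Vf,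
    LieAlgebra.SpecialLinear.sl_bracket, neg_mul_neg, neg_mul_neg, neg_sub]

/-! ### Linear independence of the `Xf i` -/

lemma Xf_linearIndependent : LinearIndependent ℝ Xf := by
  rw [Fintype.linearIndependent_iff]
  intro g hg
  have E : ∀ (m : Fin 6 → ℝ) (k : Fin 6), (∑ i, g i • Xf i) m k = 0 := by
    intro m k; rw [hg]; rfl
  have E' : ∀ (m : Fin 6 → ℝ) (k : Fin 6),
      g 0 * Xf 0 m k + g 1 * Xf 1 m k + g 2 * Xf 2 m k + g 3 * Xf 3 m k + g 4 * Xf 4 m k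
        + g 5 * Xf 5 m k + g 6 * Xf 6 m k + g 7 * Xf 7 m k = 0 := by
    intro m k
    have := E m k
    rw [Fin.sum_univ_eight] at this
    simpa using this
  have h1 := E' ![0,0,0,0,0,0] 0
  have h2 := E' ![0,0,0,0,0,0] 1
  have h3 := E' ![1,0,0,0,0,0] 0
  have h4 := E' ![1,0,0,0,0,0] 1
  have h5 := E' ![0,1,0,0,0,0] 0
  have h6 := E' ![0,1,0,0,0,0] 1
  have h7 := E' ![1,1,0,0,0,0] 0
  have h8 := E' ![1,1,0,0,0,0] 1
  have h9 := E' ![2,0,0,0,0,0] 0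
  simp only [Xf, vec8_zero, vec8_one, vec8_two, vec8_three, vec8_four, vec8_five, vec8_six,
    vec8_seven, vec6_zero, vec6_one, vec6_two, vec6_three, vec6_four, vec6_five] at h1 h2 h3 h4 h5 h6 h7 h8 h9
  norm_num at h1 h2 h3 h4 h5 h6 h7 h8 h9
  intro i
  fin_cases i
  · exact h1
  · exact h2
  · show g 2 = 0; linarith
  · show g 3 = 0; linarith
  · show g 4 = 0; linarith
  · show g 5 = 0; linarith
  · show g 6 = 0; linarith
  · show g 7 = 0; linarith

/-! ### Range and injectivity -/

lemma mem_sl_of_trace {M : Matrix (Fin 3) (Fin 3) ℝ} (h : Matrix.trace M = 0) :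
    M ∈ LieAlgebra.SpecialLinear.sl (Fin 3) ℝ := LinearMap.mem_ker.mpr h

lemma Xf_mem_range : ∀ i, Xf i ∈ LinearMap.range phi := by
  have key : ∀ (M : Matrix (Fin 3) (Fin 3) ℝ) (h : Matrix.trace M = 0) (i : Fin 8),
      Vf M = Xf i → Xf i ∈ LinearMap.range phi := by
    intro M h i hM
    exact ⟨⟨-M, mem_sl_of_trace (by rw [Matrix.trace_neg, h, neg_zero])⟩,
      by rw [phi_apply]; show Vf (- -M) = Xf i; rw [neg_neg, hM]⟩
  intro i
  fin_cases i
  · exact key !![0,0,1; 0,0,0; 0,0,0] (by simp only [Matrix.trace_fin_three, Matrix.of_apply, vec3_zero, vec3_one, vec3_two]; norm_num) 0 (by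
      funext m
      apply vec6_ext <;>
        simp only [Vf, Xf, Matrix.of_apply, vec3_zero, vec3_one, vec3_two,
          vec8_zero, vec6_zero, vec6_one, vec6_two, vec6_three, vec6_four, vec6_five] <;> ring)
  · exact key !![0,0,0; 0,0,1; 0,0,0] (by simp only [Matrix.trace_fin_three, Matrix.of_apply, vec3_zero, vec3_one, vec3_two]; norm_num) 1 (by
      funext m
      apply vec6_ext <;>
        simp only [Vf, Xf, Matrix.of_apply, vec3_zero, vec3_one, vec3_two,
          vec8_one, vec6_zero, vec6_one, vec6_two, vec6_three, vec6_four, vec6_five] <;> ring)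
  · exact key !![0,1,0; 0,0,0; 0,0,0] (by simp only [Matrix.trace_fin_three, Matrix.of_apply, vec3_zero, vec3_one, vec3_two]; norm_num) 2 (by
      funext m
      apply vec6_ext <;>
        simp only [Vf, Xf, Matrix.of_apply, vec3_zero, vec3_one, vec3_two,
          vec8_two, vec6_zero, vec6_one, vec6_two, vec6_three, vec6_four, vec6_five] <;> ring)
  · exact key !![0,0,0; 1,0,0; 0,0,0] (by simp only [Matrix.trace_fin_three, Matrix.of_apply, vec3_zero, vec3_one, vec3_two]; norm_num) 3 (by
      funext m
      apply vec6_ext <;>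
        simp only [Vf, Xf, Matrix.of_apply, vec3_zero, vec3_one, vec3_two,
          vec8_three, vec6_zero, vec6_one, vec6_two, vec6_three, vec6_four, vec6_five] <;> ring)
  · exact key !![2/3,0,0; 0,-1/3,0; 0,0,-1/3] (by simp only [Matrix.trace_fin_three, Matrix.of_apply, vec3_zero, vec3_one, vec3_two]; norm_num) 4 (by
      funext m
      apply vec6_ext <;>
        simp only [Vf, Xf, Matrix.of_apply, vec3_zero, vec3_one, vec3_two,
          vec8_four, vec6_zero, vec6_one, vec6_two, vec6_three, vec6_four, vec6_five] <;> ring)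
  · exact key !![-1/3,0,0; 0,2/3,0; 0,0,-1/3] (by simp only [Matrix.trace_fin_three, Matrix.of_apply, vec3_zero, vec3_one, vec3_two]; norm_num) 5 (by
      funext m
      apply vec6_ext <;>
        simp only [Vf, Xf, Matrix.of_apply, vec3_zero, vec3_one, vec3_two,
          vec8_five, vec6_zero, vec6_one, vec6_two, vec6_three, vec6_four, vec6_five] <;> ring)
  · exact key !![0,0,0; 0,0,0; 0,-1,0] (by simp only [Matrix.trace_fin_three, Matrix.of_apply, vec3_zero, vec3_one, vec3_two]; norm_num) 6 (by
      funext m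
      apply vec6_ext <;>
        simp only [Vf, Xf, Matrix.of_apply, vec3_zero, vec3_one, vec3_two,
          vec8_six, vec6_zero, vec6_one, vec6_two, vec6_three, vec6_four, vec6_five] <;> ring)
  · exact key !![0,0,0; 0,0,0; -1,0,0] (by simp only [Matrix.trace_fin_three, Matrix.of_apply, vec3_zero, vec3_one, vec3_two]; norm_num) 7 (by
      funext m
      apply vec6_ext <;>
        simp only [Vf, Xf, Matrix.of_apply, vec3_zero, vec3_one, vec3_two,
          vec8_seven, vec6_zero, vec6_one, vec6_two, vec6_three, vec6_four, vec6_five] <;> ring)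

lemma phi_range : LinearMap.range phi = Submodule.span ℝ (Set.range Xf) := by
  apply le_antisymm
  · rintro x ⟨A, rfl⟩
    rw [phi_apply, Vf_eq_sum]
    exact Submodule.sum_mem _ fun i _ => Submodule.smul_mem _ _ (Submodule.subset_span ⟨i, rfl⟩)
  · rw [Submodule.span_le]
    rintro _ ⟨i, rfl⟩
    exact Xf_mem_range i

lemma phi_injective : Function.Injective phi := by
  have h0 : ∀ A, phi A = 0 → A = 0 := by
    intro A hA
    rw [phi_apply, Vf_eq_sum] at hA
    have hg := Fintype.linearIndependent_iff.mp Xf_linearIndependent (gcoef (-(A.val))) hA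
    have c0 := hg 0
    have c1 := hg 1
    have c2 := hg 2
    have c3 := hg 3
    have c4 := hg 4
    have c5 := hg 5
    have c6 := hg 6
    have c7 := hg 7
    simp only [gcoef, vec8_zero, vec8_one, vec8_two, vec8_three, vec8_four, vec8_five, vec8_six,
      vec8_seven, Matrix.neg_apply, neg_eq_zero, neg_sub] at c0 c1 c2 c3 c4 c5 c6 c7
    have htr : Matrix.trace A.val = 0 := A.property
    rw [Matrix.trace_fin_three] at htr
    apply Subtype.ext
    show A.val = 0
    ext i j
    rw [Matrix.zero_apply]
    fin_cases i <;> fin_cases j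
    · show A.val 0 0 = 0; linarith
    · show A.val 0 1 = 0; linarith
    · show A.val 0 2 = 0; linarith
    · show A.val 1 0 = 0; linarith
    · show A.val 1 1 = 0; linarith
    · show A.val 1 2 = 0; linarith
    · show A.val 2 0 = 0; linarith
    · show A.val 2 1 = 0; linarith
    · show A.val 2 2 = 0; linarith
  intro A B hAB
  have h : A - B = 0 := h0 _ (by rw [map_sub, hAB, sub_self])
  exact sub_eq_zero.mp h

theorem ruleA_symmetry_algebra_is_sl3 :
    LinearIndependent ℝ Xf ∧
    (∀ V W : (Fin 6 → ℝ) → (Fin 6 → ℝ),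
      V ∈ Submodule.span ℝ (Set.range Xf) → W ∈ Submodule.span ℝ (Set.range Xf) →
      lieBracket V W ∈ Submodule.span ℝ (Set.range Xf)) ∧
    (∃ φ : (LieAlgebra.SpecialLinear.sl (Fin 3) ℝ) →ₗ[ℝ] ((Fin 6 → ℝ) → (Fin 6 → ℝ)),
      Function.Injective φ ∧
      LinearMap.range φ = Submodule.span ℝ (Set.range Xf) ∧
      ∀ A B : LieAlgebra.SpecialLinear.sl (Fin 3) ℝ,
        φ ⁅A, B⁆ = lieBracket (φ A) (φ B)) := by
  refine ⟨Xf_linearIndependent, ?_, phi, phi_injective, phi_range, phi_bracket⟩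
  intro V W hV hW
  rw [← phi_range] at hV hW
  obtain ⟨A, rfl⟩ := hV
  obtain ⟨B, rfl⟩ := hW
  rw [← phi_bracket, ← phi_range]
  exact ⟨⁅A, B⁆, rfl⟩
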